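/- For the Watson functions u, U (defined by t·e^{1−t} = e^{−x} with u(x) ≤ 1 ≤ U(x)), one has lim_{x→0⁺} (u'(x) + U'(x)) = 4/3 and lim_{x→∞} (u'(x) + U'(x)) = 1. -/

import Mathlib

open Real Filter

lemma eq_log' {x t : ℝ} (ht : 0 < t) (h : t * Real.exp (1 - t) = Real.exp (-x)) :
    x = t - 1 - Real.log t := by
  have h2 := congrArg Real.log h
  rw [Real.log_mul (ne_of_gt ht) (Real.exp_ne_zero _), Real.log_exp, Real.log_exp] at h2
  linarith

lemma F_mono' {e a : ℝ} (he : 0 ≤ e) (hea : e ≤ a) (ha : a < 1) :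
    -e - Real.log (1 - e) ≤ -a - Real.log (1 - a) := by
  have h1 : (0:ℝ) < 1 - a := by linarith
  have h2 : (0:ℝ) < 1 - e := by linarith
  have h3 : Real.log ((1-a)/(1-e)) ≤ (1-a)/(1-e) - 1 := Real.log_le_sub_one_of_pos (by positivity)
  rw [Real.log_div (by linarith) (by linarith)] at h3
  have h4 : (1-a)/(1-e) - 1 = (e - a)/(1-e) := by field_simp; ring
  have h5 : (e - a)/(1-e) ≤ e - a := by
    rw [div_le_iff₀ h2]; nlinarith
  linarith

lemma G_mono' {e b : ℝ} (he : 0 ≤ e) (heb : e ≤ b) :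
    e - Real.log (1 + e) ≤ b - Real.log (1 + b) := by
  have h2 : (0:ℝ) < 1 + e := by linarith
  have h3 : Real.log ((1+b)/(1+e)) ≤ (1+b)/(1+e) - 1 :=
    Real.log_le_sub_one_of_pos (div_pos (by linarith) (by linarith))
  rw [Real.log_div (by linarith) (by linarith)] at h3
  have h4 : (1+b)/(1+e) - 1 = (b - e)/(1+e) := by field_simp; ring
  have h5 : (b - e)/(1+e) ≤ b - e := by
    rw [div_le_iff₀ h2]; nlinarith
  linarith

lemma F_pos' {e : ℝ} (h0 : 0 < e) (h1 : e < 1) : 0 < -e - Real.log (1 - e) := by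
  have := Real.log_lt_sub_one_of_pos (x := 1 - e) (by linarith) (ne_of_lt (by linarith))
  linarith

lemma G_pos' {e : ℝ} (h0 : 0 < e) : 0 < e - Real.log (1 + e) := by
  have := Real.log_lt_sub_one_of_pos (x := 1 + e) (by linarith) (ne_of_gt (by linarith))
  linarith

-- the two "tendsto zero" lemmas near 0+
lemma a_tendsto (u : ℝ → ℝ)
    (hu : ∀ x > 0, u x ∈ Set.Ioo (0 : ℝ) 1 ∧ u x * Real.exp (1 - u x) = Real.exp (-x)) :
    Tendsto (fun x => 1 - u x) (nhdsWithin 0 (Set.Ioi 0)) (nhds 0) := by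
  rw [Metric.tendsto_nhds]
  intro ε hε
  set ε' := min (ε/2) (1/2) with hε'def
  have hε'0 : 0 < ε' := lt_min (by linarith) (by norm_num)
  have hε'1 : ε' < 1 := lt_of_le_of_lt (min_le_right _ _) (by norm_num)
  have hF := F_pos' hε'0 hε'1
  filter_upwards [Ioo_mem_nhdsGT hF] with x hx
  obtain ⟨⟨hu0, hu1⟩, hueq⟩ := hu x hx.1
  have hxeq : x = -(1 - u x) - Real.log (1 - (1 - u x)) := by
    have := eq_log' hu0 hueq
    rw [show (1:ℝ) - (1 - u x) = u x by ring]
    linarith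
  have hcon : 1 - u x < ε' := by
    by_contra hcon
    push_neg at hcon
    have := F_mono' hε'0.le hcon (by linarith)
    linarith [hx.2]
  rw [Real.dist_eq, sub_zero, abs_of_pos (by linarith : (0:ℝ) < 1 - u x)]
  calc 1 - u x < ε' := hcon
    _ ≤ ε/2 := min_le_left _ _
    _ < ε := by linarith

lemma b_tendsto (U : ℝ → ℝ)
    (hU : ∀ x > 0, U x ∈ Set.Ioi (1 : ℝ) ∧ U x * Real.exp (1 - U x) = Real.exp (-x)) :
    Tendsto (fun x => U x - 1) (nhdsWithin 0 (Set.Ioi 0)) (nhds 0) := by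
  rw [Metric.tendsto_nhds]
  intro ε hε
  set ε' := ε/2 with hε'def
  have hε'0 : 0 < ε' := by linarith
  have hG := G_pos' hε'0
  filter_upwards [Ioo_mem_nhdsGT hG] with x hx
  obtain ⟨hU1, hUeq⟩ := hU x hx.1
  rw [Set.mem_Ioi] at hU1
  have hxeq : x = (U x - 1) - Real.log (1 + (U x - 1)) := by
    have := eq_log' (by linarith : (0:ℝ) < U x) hUeq
    rw [show (1:ℝ) + (U x - 1) = U x by ring]
    linarith
  have hcon : U x - 1 < ε' := by
    by_contra hcon
    push_neg at hcon
    have := G_mono' hε'0.le hcon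
    linarith [hx.2]
  rw [Real.dist_eq, sub_zero, abs_of_pos (by linarith : (0:ℝ) < U x - 1)]
  linarith

lemma sum3' (y : ℝ) : (∑ i ∈ Finset.range 3, y ^ (i + 1) / (i + 1)) = y + y^2/2 + y^3/3 := by
  simp [Finset.sum_range_succ]; norm_num

set_option maxHeartbeats 1000000 in
lemma key_bound {x a b : ℝ} (hx : 0 < x) (ha : 0 < a) (ha6 : a ≤ 1/6)
    (hb : 0 < b) (hb6 : b ≤ 1/6)
    (hxa : x = -a - Real.log (1 - a)) (hxb : x = b - Real.log (1 + b)) :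
    |(2 - 1/a + 1/b) - 4/3| ≤ 50 * a := by
  have hRa := Real.abs_log_sub_add_sum_range_le (x := a) (by rw [abs_of_pos ha]; linarith) 3
  have hRb := Real.abs_log_sub_add_sum_range_le (x := -b) (by rw [abs_neg, abs_of_pos hb]; linarith) 3
  rw [sum3', abs_of_pos ha] at hRa
  rw [sum3'] at hRb
  rw [show (1:ℝ) - -b = 1 + b by ring] at hRb
  rw [abs_neg, abs_of_pos hb] at hRb
  norm_num at hRa hRb
  obtain ⟨R, hRdef⟩ : ∃ R : ℝ, R = a + a^2/2 + a^3/3 + Real.log (1-a) := ⟨_, rfl⟩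
  obtain ⟨R', hR'def⟩ : ∃ R' : ℝ, R' = -b + b^2/2 - b^3/3 + Real.log (1+b) := ⟨_, rfl⟩
  have hRb' : |R'| ≤ b^4/(1-b) := by
    rw [show R' = (-b) + (-b)^2/2 + (-b)^3/3 + Real.log (1+b) by rw [hR'def]; ring]
    convert hRb using 3 <;> ring
  have hRa' : |R| ≤ a^4/(1-a) := by
    rw [hRdef]
    convert hRa using 3 <;> ring
  have hR2 : |R| ≤ 2*a^4 := by
    refine hRa'.trans ?_
    rw [div_le_iff₀ (by linarith)]
    nlinarith [pow_pos ha 4]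
  have hR2' : |R'| ≤ 2*b^4 := by
    refine hRb'.trans ?_
    rw [div_le_iff₀ (by linarith)]
    nlinarith [pow_pos hb 4]
  obtain ⟨hRl, hRu⟩ := abs_le.mp hR2
  obtain ⟨hR'l, hR'u⟩ := abs_le.mp hR2'
  have hxa' : x = a^2/2 + a^3/3 - R := by
    have h9 : Real.log (1-a) = R - a - a^2/2 - a^3/3 := by rw [hRdef]; ring
    rw [h9] at hxa; linarith
  have hxb' : x = b^2/2 - b^3/3 - R' := by
    have h9 : Real.log (1+b) = R' + b - b^2/2 + b^3/3 := by rw [hR'def]; ring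
    rw [h9] at hxb; linarith
  clear hRa hRb hRa' hRb' hxa hxb hRdef hR'def hR2 hR2'
  -- basic power estimates
  have ha4 : a^4 ≤ a^3/6 := by nlinarith [pow_pos ha 3]
  have hb4 : b^4 ≤ b^3/6 := by nlinarith [pow_pos hb 3]
  have ha3 : a^3 ≤ a^2/6 := by nlinarith [pow_pos ha 2]
  have hb3 : b^3 ≤ b^2/6 := by nlinarith [pow_pos hb 2]
  -- order relations
  have h2x1 : a^2 ≤ 2*x := by linarith
  have h2x2 : 2*x ≤ b^2 := by linarith
  have hab : a ≤ b := by nlinarith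
  have h2x3 : (7/9)*b^2 ≤ 2*x := by linarith
  have h2x4 : 2*x ≤ (11/9)*a^2 := by linarith
  have hba : b ≤ 2*a := by nlinarith
  have hb3a : b^3 ≤ 8*a^3 := by nlinarith [pow_pos ha 3]
  have hb4a : b^4 ≤ 16*a^4 := by nlinarith [pow_pos ha 4, pow_pos hb 2, sq_nonneg (b^2 - 4*a^2)]
  have hkey : b^2 - a^2 = (2/3)*(a^3+b^3) + 2*R' - 2*R := by linarith
  have hupper : b^2 - a^2 ≤ 18*a^3 := by linarith
  have hbma : b - a ≤ 9*a^2 := by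
    have h1 : (b-a)*(2*a) ≤ (b-a)*(a+b) := mul_le_mul_of_nonneg_left (by linarith) (sub_nonneg.mpr hab)
    have h2 : (b-a)*(a+b) ≤ 18*a^3 := by
      calc (b-a)*(a+b) = b^2 - a^2 := by ring
        _ ≤ 18*a^3 := hupper
    have h3 : (b-a)*(2*a) ≤ (9*a^2)*(2*a) := by
      calc (b-a)*(2*a) ≤ 18*a^3 := le_trans h1 h2
        _ = (9*a^2)*(2*a) := by ring
    exact le_of_mul_le_mul_right h3 (by positivity)
  have habp : 0 < a + b := by linarith
  have hsq : (b-a)^2 ≤ 81*a^4 := by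
    have h0 : 0 ≤ b - a := sub_nonneg.mpr hab
    have h1 : (b-a)*(b-a) ≤ (9*a^2)*(9*a^2) := mul_le_mul hbma hbma h0 (by positivity)
    calc (b-a)^2 = (b-a)*(b-a) := by ring
      _ ≤ (9*a^2)*(9*a^2) := h1
      _ = 81*a^4 := by ring
  have hid : (b - a - (2/3)*a*b)*(a+b) = (2/3)*(a-b)^2*(a+b) + (2*R' - 2*R) := by
    linear_combination hkey
  have hcube : (a-b)^2*(a+b) ≤ 27*a^4 := by
    have h1 : (a-b)^2*(a+b) ≤ (81*a^4)*(a+b) := by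
      apply mul_le_mul_of_nonneg_right _ habp.le
      rw [show (a-b)^2 = (b-a)^2 by ring]; exact hsq
    have h2 : (81*a^4)*(a+b) ≤ (81*a^4)*(1/3) := by
      apply mul_le_mul_of_nonneg_left (by linarith) (by positivity)
    calc (a-b)^2*(a+b) ≤ (81*a^4)*(a+b) := h1
      _ ≤ (81*a^4)*(1/3) := h2
      _ = 27*a^4 := by ring
  have hcube0 : 0 ≤ (a-b)^2*(a+b) := mul_nonneg (sq_nonneg _) habp.le
  have hXu : (b - a - (2/3)*a*b)*(a+b) ≤ 86*a^4 := by rw [hid]; linarith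
  have hXl : -(86*a^4) ≤ (b - a - (2/3)*a*b)*(a+b) := by rw [hid]; linarith
  have hprod : 2*a^4 ≤ a^2*b*(a+b) := by
    have h1 : a^2*a*(a+a) ≤ a^2*b*(a+b) := by
      apply mul_le_mul _ (by linarith) (by positivity) _
      · exact mul_le_mul_of_nonneg_left hab (by positivity)
      · positivity
    calc 2*a^4 = a^2*a*(a+a) := by ring
      _ ≤ a^2*b*(a+b) := h1
  have hXabs : |b - a - (2/3)*a*b| ≤ 43*(a^2*b) := by
    rw [abs_le]
    constructor
    · have h1 : (-(43*(a^2*b)))*(a+b) ≤ (b - a - (2/3)*a*b)*(a+b) := by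
        calc (-(43*(a^2*b)))*(a+b) = -(43*(a^2*b*(a+b))) := by ring
          _ ≤ -(86*a^4) := by linarith
          _ ≤ (b - a - (2/3)*a*b)*(a+b) := hXl
      exact le_of_mul_le_mul_right h1 habp
    · have h1 : (b - a - (2/3)*a*b)*(a+b) ≤ (43*(a^2*b))*(a+b) := by
        calc (b - a - (2/3)*a*b)*(a+b) ≤ 86*a^4 := hXu
          _ ≤ 43*(a^2*b*(a+b)) := by linarith
          _ = (43*(a^2*b))*(a+b) := by ring
      exact le_of_mul_le_mul_right h1 habp
  have hform : (2 - 1/a + 1/b) - 4/3 = -(b - a - (2/3)*a*b)/(a*b) := by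
    field_simp
    ring
  rw [hform, abs_div, abs_neg, abs_of_pos (by positivity : (0:ℝ) < a*b),
    div_le_iff₀ (by positivity : (0:ℝ) < a*b)]
  have hfin : 43*(a^2*b) ≤ 50*a*(a*b) := by
    have : 0 ≤ a^2*b := by positivity
    calc 43*(a^2*b) ≤ 50*(a^2*b) := by linarith
      _ = 50*a*(a*b) := by ring
  exact le_trans hXabs hfin

theorem watson_deriv_sum_limits (u U : ℝ → ℝ)
    (hu : ∀ x > 0, u x ∈ Set.Ioo (0 : ℝ) 1 ∧ u x * Real.exp (1 - u x) = Real.exp (-x))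
    (hU : ∀ x > 0, U x ∈ Set.Ioi (1 : ℝ) ∧ U x * Real.exp (1 - U x) = Real.exp (-x))
    (hu' : ∀ x > 0, HasDerivAt u (-(u x) / (1 - u x)) x)
    (hU' : ∀ x > 0, HasDerivAt U (U x / (U x - 1)) x) :
    Tendsto (fun x => deriv u x + deriv U x) (nhdsWithin 0 (Set.Ioi 0)) (nhds (4 / 3)) ∧
    Tendsto (fun x => deriv u x + deriv U x) atTop (nhds 1) := by
  have hA := a_tendsto u hu
  have hB := b_tendsto U hU
  constructor
  · -- limit at 0+
    have ha6 : ∀ᶠ x in nhdsWithin 0 (Set.Ioi 0), dist (1 - u x) 0 < 1/6 :=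
      hA (Metric.ball_mem_nhds 0 (by norm_num))
    have hb6 : ∀ᶠ x in nhdsWithin 0 (Set.Ioi 0), dist (U x - 1) 0 < 1/6 :=
      hB (Metric.ball_mem_nhds 0 (by norm_num))
    have hmain : ∀ᶠ x in nhdsWithin 0 (Set.Ioi 0),
        |(deriv u x + deriv U x) - 4/3| ≤ 50 * (1 - u x) := by
      filter_upwards [ha6, hb6, self_mem_nhdsWithin] with x h6a h6b hx0
      rw [Set.mem_Ioi] at hx0
      obtain ⟨⟨hu0, hu1⟩, hueq⟩ := hu x hx0
      obtain ⟨hU1, hUeq⟩ := hU x hx0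
      rw [Set.mem_Ioi] at hU1
      rw [Real.dist_eq, sub_zero] at h6a h6b
      have ha : 0 < 1 - u x := by linarith
      have hb : 0 < U x - 1 := by linarith
      rw [abs_of_pos ha] at h6a
      rw [abs_of_pos hb] at h6b
      have hxa : x = -(1 - u x) - Real.log (1 - (1 - u x)) := by
        have := eq_log' hu0 hueq
        rw [show (1:ℝ) - (1 - u x) = u x by ring]
        linarith
      have hxb : x = (U x - 1) - Real.log (1 + (U x - 1)) := by
        have := eq_log' (by linarith : (0:ℝ) < U x) hUeq
        rw [show (1:ℝ) + (U x - 1) = U x by ring]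
        linarith
      have hkb := key_bound hx0 ha h6a.le hb h6b.le hxa hxb
      have hderiv : deriv u x + deriv U x = 2 - 1/(1 - u x) + 1/(U x - 1) := by
        rw [(hu' x hx0).deriv, (hU' x hx0).deriv]
        field_simp
        ring
      rw [hderiv]
      exact hkb
    have hlow : Tendsto (fun x => 4/3 - 50*(1 - u x)) (nhdsWithin 0 (Set.Ioi 0)) (nhds (4/3)) := by
      have h := tendsto_const_nhds (x := (4:ℝ)/3) (f := nhdsWithin 0 (Set.Ioi 0)) |>.sub (hA.const_mul 50)
      simpa using h
    have hupp : Tendsto (fun x => 4/3 + 50*(1 - u x)) (nhdsWithin 0 (Set.Ioi 0)) (nhds (4/3)) := by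
      have h := tendsto_const_nhds (x := (4:ℝ)/3) (f := nhdsWithin 0 (Set.Ioi 0)) |>.add (hA.const_mul 50)
      simpa using h
    apply tendsto_of_tendsto_of_tendsto_of_le_of_le' hlow hupp
    · filter_upwards [hmain] with x hx
      have := abs_le.mp hx
      linarith [this.1]
    · filter_upwards [hmain] with x hx
      have := abs_le.mp hx
      linarith [this.2]
  · -- limit at ∞
    have h2a : Tendsto u atTop (nhds 0) := by
      apply tendsto_of_tendsto_of_tendsto_of_le_of_le' tendsto_const_nhds
        Real.tendsto_exp_neg_atTop_nhds_zero
      · filter_upwards [eventually_gt_atTop (0:ℝ)] with x hx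
        exact (hu x hx).1.1.le
      · filter_upwards [eventually_gt_atTop (0:ℝ)] with x hx
        obtain ⟨⟨hu0, hu1⟩, hueq⟩ := hu x hx
        calc u x = u x * 1 := by ring
          _ ≤ u x * Real.exp (1 - u x) :=
            mul_le_mul_of_nonneg_left (Real.one_le_exp (by linarith)) hu0.le
          _ = Real.exp (-x) := hueq
    have term1 : Tendsto (fun x => -(u x)/(1 - u x)) atTop (nhds 0) := by
      have h := (h2a.neg).div (tendsto_const_nhds.sub h2a) (by norm_num : (1:ℝ) - 0 ≠ 0)
      simpa [Pi.div_def] using h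
    have hUlb : ∀ᶠ x in atTop, x + 1 ≤ U x := by
      filter_upwards [eventually_gt_atTop (0:ℝ)] with x hx
      obtain ⟨hU1, hUeq⟩ := hU x hx
      rw [Set.mem_Ioi] at hU1
      have hxeq := eq_log' (by linarith : (0:ℝ) < U x) hUeq
      have hlog : 0 ≤ Real.log (U x) := Real.log_nonneg (by linarith)
      linarith
    have hUtop : Tendsto U atTop atTop :=
      tendsto_atTop_mono' atTop hUlb (tendsto_atTop_add_const_right atTop 1 tendsto_id)
    have hUm1 : Tendsto (fun x => U x - 1) atTop atTop := by
      have := tendsto_atTop_add_const_right atTop (-1) hUtop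
      simpa [sub_eq_add_neg] using this
    have hinv : Tendsto (fun x => (U x - 1)⁻¹) atTop (nhds 0) := hUm1.inv_tendsto_atTop
    have term2 : Tendsto (fun x => U x/(U x - 1)) atTop (nhds 1) := by
      have h : Tendsto (fun x => 1 + (U x - 1)⁻¹) atTop (nhds (1 + 0)) :=
        tendsto_const_nhds.add hinv
      rw [add_zero] at h
      apply h.congr'
      filter_upwards [eventually_gt_atTop (0:ℝ)] with x hx
      obtain ⟨hU1, _⟩ := hU x hx
      rw [Set.mem_Ioi] at hU1
      have : U x - 1 ≠ 0 := by linarith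
      field_simp; ring
    have hfinal : Tendsto (fun x => -(u x)/(1 - u x) + U x/(U x - 1)) atTop (nhds 1) := by
      have := term1.add term2
      simpa using this
    apply hfinal.congr'
    filter_upwards [eventually_gt_atTop (0:ℝ)] with x hx
    rw [(hu' x hx).deriv, (hU' x hx).deriv]
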